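/- For the ℂ-vector space ℂ[t] of polynomials in one variable, and for every basis (b_i)_{i∈I} of ℂ[t], there exists x ∈ ℂ such that the hyperplane H_x = {p ∈ ℂ[t] : p(x) = 0} is NOT the span of any subset of the basis (b_i). In particular, no single basis of ℂ[t] makes all the subspaces H_x, x ∈ ℂ, simultaneously coordinate subspaces. -/

import Mathlib

/-- For any basis of `ℂ[t]` as a `ℂ`-vector space, there is some `x ∈ ℂ` such that the
hyperplane `H_x = {p : p(x) = 0}` (the kernel of evaluation at `x`) is not spanned by a
subset of the basis.  In particular no single basis makes all the `H_x` simultaneously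
coordinate subspaces. -/
theorem exists_eval_ker_not_coordinate_subspace
    {ι : Type*} (b : Module.Basis ι ℂ (Polynomial ℂ)) :
    ∃ x : ℂ, ¬ ∃ J : Set ι,
      LinearMap.ker ((Polynomial.aeval x : Polynomial ℂ →ₐ[ℂ] ℂ).toLinearMap)
        = Submodule.span ℂ (b '' J) := by
  by_contra h
  push_neg at h
  -- ι is infinite since ℂ[X] has a basis indexed by ℕ
  have : Infinite ι :=
    (b.indexEquiv (Polynomial.basisMonomials ℂ)).infinite_iff.mpr inferInstance
  obtain ⟨j, k, hjk⟩ := exists_pair_ne ι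
  -- key: at each x, at most one basis vector can be nonvanishing
  have key : ∀ x : ℂ, ∀ i i' : ι,
      Polynomial.aeval x (b i) ≠ 0 → Polynomial.aeval x (b i') ≠ 0 → i = i' := by
    intro x i i' hi hi'
    obtain ⟨J, hJ⟩ := h x
    have memJ : ∀ m : ι, Polynomial.aeval x (b m) ≠ 0 → m ∉ J := by
      intro m hm hmJ
      exact hm (by
        have hmem : b m ∈ Submodule.span ℂ (b '' J) :=
          Submodule.subset_span ⟨m, hmJ, rfl⟩
        rw [← hJ] at hmem
        exact hmem)
    by_contra hne
    set c := Polynomial.aeval x (b i) with hc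
    set d := Polynomial.aeval x (b i') with hd
    have hp : d • b i - c • b i' ∈
        LinearMap.ker ((Polynomial.aeval x : Polynomial ℂ →ₐ[ℂ] ℂ).toLinearMap) := by
      simp only [LinearMap.mem_ker, map_sub, map_smul, AlgHom.toLinearMap_apply,
        ← hc, ← hd, smul_eq_mul]
      ring
    rw [hJ, Module.Basis.mem_span_image] at hp
    have hrepr : (b.repr (d • b i - c • b i')) i = d := by
      simp [Finsupp.single_apply, hne, Ne.symm hne]
    have hiJ : i ∈ J := hp (by
      simp only [Finset.coe_sort_coe, Finsupp.mem_support_iff, Finset.mem_coe]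
      rw [hrepr]; exact hi')
    exact memJ i hi hiJ
  -- hence b j * b k vanishes everywhere
  have hvan : ∀ x : ℂ, Polynomial.eval x (b j * b k) = Polynomial.eval x 0 := by
    intro x
    by_contra hx
    rw [Polynomial.eval_zero, Polynomial.eval_mul] at hx
    obtain ⟨hxj, hxk⟩ := mul_ne_zero_iff.mp hx
    have h1 : Polynomial.aeval x (b j) ≠ 0 := by
      rw [Polynomial.aeval_def, Polynomial.eval₂_eq_eval_map, Algebra.algebraMap_self, Polynomial.map_id]; exact hxj
    have h2 : Polynomial.aeval x (b k) ≠ 0 := by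
      rw [Polynomial.aeval_def, Polynomial.eval₂_eq_eval_map, Algebra.algebraMap_self, Polynomial.map_id]; exact hxk
    exact hjk (key x j k h1 h2)
  have hzero : b j * b k = 0 := Polynomial.funext hvan
  rcases mul_eq_zero.mp hzero with h0 | h0
  · exact b.ne_zero j h0
  · exact b.ne_zero k h0
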